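/- Let d be a positive integer, κ > 0, i = (i₁, i₂, i₃) ∈ [d]³, and s = (s₁, s₂, s₃) ∈ {−1, 1}³. Let x̃' ∈ ℝ^d be arbitrary and let x̃ = sgn(x̃') ∈ {−1, 1}^d be its coordinatewise sign (with sgn(0) = 1). Let C^0 = {0} and C^ψ = {c^{ψ,1}, c^{ψ,2}, c^{ψ,3}} with c^{ψ,j} = 2κ·s_j·𝟏_{i_j}. Then cost_{C^ψ,2}(x̃') − cost_{C^0,2}(x̃') ≥ 4κ²·(1 − ψ_{i,s}(x̃)) − 4κ·‖x̃' − κ·sgn(x̃')‖₂. -/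

import Mathlib

/-- `sgn v = 1` if `v ≥ 0` and `-1` if `v < 0`. -/
noncomputable def sgn (v : ℝ) : ℝ := if 0 ≤ v then 1 else -1

/-- Coordinatewise sign of a vector in Euclidean space. -/
noncomputable def sgnVecE {d : ℕ} (y : EuclideanSpace ℝ (Fin d)) : EuclideanSpace ℝ (Fin d) :=
  WithLp.toLp 2 (fun i => sgn (y i))

/-- The `k`-means cost query in the Euclidean metric: `cost_{C,2}(x) = min_{c ∈ C} ‖x - c‖₂²`. -/
noncomputable def costE {d k : ℕ} (C : Fin k → EuclideanSpace ℝ (Fin d))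
    (x : EuclideanSpace ℝ (Fin d)) : ℝ :=
  ⨅ j : Fin k, ‖x - C j‖ ^ 2

/-- The 3-literal disjunction query `ψ_{i,s}`. -/
noncomputable def psi {d : ℕ} (idx : Fin 3 → Fin d) (s : Fin 3 → ℝ) (x : Fin d → ℝ) : ℝ :=
  1 - (1 / 4) * ((1 - s 0 * x (idx 0)) * (1 - s 1 * x (idx 1)) * (1 - s 2 * x (idx 2)))

/-- For sign variables, the product of `(1 - aᵢ)` is bounded by `4` times any single factor. -/
lemma prod_le_four_factor (a b c : ℝ) (ha : a = 1 ∨ a = -1) (hb : b = 1 ∨ b = -1)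
    (hc : c = 1 ∨ c = -1) :
    (1 - a) * (1 - b) * (1 - c) ≤ 4 * (1 - a) ∧
    (1 - a) * (1 - b) * (1 - c) ≤ 4 * (1 - b) ∧
    (1 - a) * (1 - b) * (1 - c) ≤ 4 * (1 - c) := by
  rcases ha with rfl | rfl <;> rcases hb with rfl | rfl <;> rcases hc with rfl | rfl <;> norm_num

set_option maxHeartbeats 1000000 in
theorem stmt_11 (d : ℕ) (hd : 0 < d) (κ : ℝ) (hκ : 0 < κ)
    (idx : Fin 3 → Fin d) (s : Fin 3 → ℝ) (hs : ∀ j, s j = 1 ∨ s j = -1)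
    (x' : EuclideanSpace ℝ (Fin d)) :
    costE (fun j : Fin 3 => (2 * κ * s j) • EuclideanSpace.single (idx j) (1 : ℝ)) x' -
        costE (fun _ : Fin 1 => (0 : EuclideanSpace ℝ (Fin d))) x' ≥
      4 * κ ^ 2 * (1 - psi idx s (sgnVecE x')) - 4 * κ * ‖x' - κ • sgnVecE x'‖ := by
  classical
  set xt : EuclideanSpace ℝ (Fin d) := sgnVecE x' with hxt
  have hxt1 : ∀ i : Fin d, xt i = 1 ∨ xt i = -1 := by
    intro i
    simp only [hxt, sgnVecE, sgn, PiLp.toLp_apply]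
    split <;> simp
  set N : ℝ := ‖x' - κ • xt‖ with hN
  have hN0 : 0 ≤ N := norm_nonneg _
  have hcoord : ∀ i : Fin d, |x' i - κ * xt i| ≤ N := by
    intro i
    have h1 : (inner ℝ (EuclideanSpace.single i (1 : ℝ)) (x' - κ • xt) : ℝ)
        = x' i - κ * xt i := by
      rw [EuclideanSpace.inner_single_left]
      simp [PiLp.sub_apply, PiLp.smul_apply]
    have h2 := norm_inner_le_norm (𝕜 := ℝ) (EuclideanSpace.single i (1 : ℝ)) (x' - κ • xt)
    rw [h1] at h2
    simpa [Real.norm_eq_abs] using h2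
  have hc0 : costE (fun _ : Fin 1 => (0 : EuclideanSpace ℝ (Fin d))) x' = ‖x'‖ ^ 2 := by
    simp [costE, ciInf_const]
  -- sign products are `±1`
  have hsx : ∀ j : Fin 3, s j * xt (idx j) = 1 ∨ s j * xt (idx j) = -1 := by
    intro j
    rcases hs j with h | h <;> rcases hxt1 (idx j) with h' | h' <;> rw [h, h'] <;> norm_num
  have hP := prod_le_four_factor _ _ _ (hsx 0) (hsx 1) (hsx 2)
  have key : ∀ j : Fin 3, 4 * κ ^ 2 * (1 - psi idx s xt) - 4 * κ * N + ‖x'‖ ^ 2 ≤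
      ‖x' - (2 * κ * s j) • EuclideanSpace.single (idx j) (1 : ℝ)‖ ^ 2 := by
    intro j
    have hnormc : ‖(2 * κ * s j) • EuclideanSpace.single (idx j) (1 : ℝ)‖ ^ 2 = 4 * κ ^ 2 := by
      rw [norm_smul]
      rcases hs j with h | h <;> simp [h, abs_of_pos hκ] <;> ring
    have hinner : (inner ℝ x' ((2 * κ * s j) • EuclideanSpace.single (idx j) (1 : ℝ)) : ℝ)
        = (2 * κ * s j) * x' (idx j) := by
      rw [real_inner_smul_right, EuclideanSpace.inner_single_right]
      simp [mul_comm]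
    rw [norm_sub_sq_real, hinner, hnormc]
    have hb : s j * x' (idx j) ≤ N + κ * (s j * xt (idx j)) := by
      have h1 := hcoord (idx j)
      have h2 : s j * (x' (idx j) - κ * xt (idx j)) ≤ N := by
        rcases hs j with h | h <;> rw [h] <;> nlinarith [abs_le.mp h1]
      nlinarith
    have hprod : 4 * κ ^ 2 * (1 - psi idx s xt) ≤ 4 * κ ^ 2 * (1 - s j * xt (idx j)) := by
      unfold psi
      have hk2 : (0:ℝ) ≤ 4 * κ ^ 2 := by positivity
      have q0 := mul_le_mul_of_nonneg_left hP.1 hk2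
      have q1 := mul_le_mul_of_nonneg_left hP.2.1 hk2
      have q2 := mul_le_mul_of_nonneg_left hP.2.2 hk2
      fin_cases j <;> simp only [Fin.zero_eta, Fin.mk_one, Fin.reduceFinMk] <;>
        [linarith [q0]; linarith [q1]; linarith [q2]]
    nlinarith
  have hlb := le_ciInf key
  rw [ge_iff_le, hc0]
  unfold costE
  linarith
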